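/- Let C be a k-coalgebra and c ∈ C. Let N_c be the smallest subcoalgebra of C containing c, regarded as a right C-comodule via Δ. Given any vector space U with a dinatural family i_Y^U : Hom_k(Y,Y) → U over finite-dimensional right C-comodules Y, the map φ : C → U defined by φ(c) := i_{N_c}^U(ε ⊗ c) (where (ε ⊗ c)(d) = ε(d)c for d ∈ N_c) is the unique linear map satisfying φ ∘ i_X = i_X^U for all finite-dimensional right C-comodules X, where i_X(β ⊗ x) = β(x_(0))x_(1). -/

import Mathlib

/- STATEMENT 15: let C be a k-coalgebra, and for each c ∈ C let N_c be the
smallest subcoalgebra of C containing c, regarded as a right C-comodule via Δ.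
Given any vector space U with a dinatural family i^U over finite-dimensional
right C-comodules, the map φ : C → U, φ(c) = i_{N_c}^U(ε ⊗ c), is the unique
linear map with φ ∘ i_X = i_X^U for all X, where i_X(β ⊗ x) = β(x₍₀₎)x₍₁₎. -/

open TensorProduct

noncomputable section
variable (k : Type) [Field k]
variable (C : Type) [AddCommGroup C] [Module k C] [Coalgebra k C]

/-- A finite-dimensional right `C`-comodule. -/
structure FdComod where
  carrier : Type
  [ab : AddCommGroup carrier]
  [mod : Module k carrier]
  [fin : FiniteDimensional k carrier]
  ρ : carrier →ₗ[k] carrier ⊗[k] C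
  coassoc : (TensorProduct.assoc k carrier C C).toLinearMap ∘ₗ
      (TensorProduct.map ρ LinearMap.id) ∘ₗ ρ
      = (TensorProduct.map LinearMap.id Coalgebra.comul) ∘ₗ ρ
  counit : (TensorProduct.map LinearMap.id Coalgebra.counit) ∘ₗ ρ
      = (TensorProduct.rid k carrier).symm.toLinearMap

attribute [instance] FdComod.ab FdComod.mod FdComod.fin

/-- A morphism of right `C`-comodules. -/
def IsComodHom (X Y : FdComod k C) (f : X.carrier →ₗ[k] Y.carrier) : Prop :=
  Y.ρ ∘ₗ f = (TensorProduct.map f LinearMap.id) ∘ₗ X.ρ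

/-- Dinaturality of a family of maps `Hom_k(X,X) → U` indexed by
finite-dimensional right `C`-comodules: `i_X(f ∘ S) = i_Y(S ∘ f)` for any
comodule morphism `f : Y → X` and linear map `S : X → Y`. -/
def DinatComod (U : Type) [AddCommGroup U] [Module k U]
    (i : ∀ X : FdComod k C, (X.carrier →ₗ[k] X.carrier) →ₗ[k] U) : Prop :=
  ∀ (X Y : FdComod k C) (f : Y.carrier →ₗ[k] X.carrier), IsComodHom k C Y X f →
    ∀ S : X.carrier →ₗ[k] Y.carrier, i X (f ∘ₗ S) = i Y (S ∘ₗ f)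

/-- The canonical maps `i_X : Hom_k(X,X) → C`; on a rank-one map `β ⊗ x`
(i.e. `y ↦ β(y)x`) it is given by `β(x₍₀₎) x₍₁₎`. -/
def canI (X : FdComod k C) : (X.carrier →ₗ[k] X.carrier) →ₗ[k] C :=
  let b := Module.Free.chooseBasis k X.carrier
  ∑ j, ((TensorProduct.lid k C).toLinearMap ∘ₗ
          TensorProduct.map (b.coord j) LinearMap.id ∘ₗ X.ρ) ∘ₗ
        (LinearMap.applyₗ (b j) : (X.carrier →ₗ[k] X.carrier) →ₗ[k] X.carrier)

/-- `D` is a subcoalgebra of `C`: `Δ(D) ⊆ D ⊗ D`. -/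
def IsSubcoalgebra (D : Submodule k C) : Prop :=
  ∀ c ∈ D, (Coalgebra.comul (R := k) c) ∈
    LinearMap.range (TensorProduct.map D.subtype D.subtype)


namespace Stmt15Aux
open Coalgebra LinearMap Module

variable {k : Type} [Field k] {C : Type} [AddCommGroup C] [Module k C] [Coalgebra k C]

set_option linter.unusedSectionVars false

abbrev bIdx (X : FdComod k C) := Free.ChooseBasisIndex k X.carrier
noncomputable abbrev bas (X : FdComod k C) : Basis (bIdx X) k X.carrier :=
  Free.chooseBasis k X.carrier

/-- The coefficient maps of a f.d. comodule w.r.t. the chosen basis. -/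
noncomputable def gB (X : FdComod k C) (j : bIdx X) : X.carrier →ₗ[k] C :=
  (TensorProduct.lid k C).toLinearMap ∘ₗ
    TensorProduct.map ((bas X).coord j) LinearMap.id ∘ₗ X.ρ

lemma expand {M W : Type} [AddCommGroup M] [Module k M] [AddCommGroup W] [Module k W]
    {ι : Type} [Fintype ι] (b : Basis ι k M) (t : M ⊗[k] W) :
    ∑ j, b j ⊗ₜ[k] (TensorProduct.lid k W (TensorProduct.map (b.coord j) LinearMap.id t)) = t := by
  induction t using TensorProduct.induction_on with
  | zero => simp
  | tmul x w =>
      simp only [TensorProduct.map_tmul, LinearMap.id_coe, id_eq, TensorProduct.lid_tmul,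
        Basis.coord_apply]
      simp_rw [TensorProduct.tmul_smul, TensorProduct.smul_tmul', ← TensorProduct.sum_tmul]
      rw [Basis.sum_repr]
  | add u v hu hv =>
      simp only [map_add, TensorProduct.tmul_add, Finset.sum_add_distrib, hu, hv]

lemma extract {M W : Type} [AddCommGroup M] [Module k M] [AddCommGroup W] [Module k W]
    {ι : Type} [Fintype ι] (b : Basis ι k M) (w : ι → W) (j : ι) :
    TensorProduct.lid k W (TensorProduct.map (b.coord j) LinearMap.id (∑ i, b i ⊗ₜ[k] w i)) = w j := by
  classical
  simp [map_sum, Basis.coord_apply, Basis.repr_self, Finsupp.single_apply, ite_smul,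
    Finset.sum_ite_eq']

lemma rho_expand (X : FdComod k C) (x : X.carrier) :
    X.ρ x = ∑ j, bas X j ⊗ₜ[k] gB X j x := by
  simp only [gB, LinearMap.comp_apply, LinearEquiv.coe_coe]
  exact (expand (bas X) (X.ρ x)).symm

lemma comul_gB (X : FdComod k C) (j : bIdx X) (x : X.carrier) :
    Coalgebra.comul (R := k) (gB X j x) = ∑ i, gB X j (bas X i) ⊗ₜ[k] gB X i x := by
  have h := LinearMap.congr_fun X.coassoc x
  simp only [LinearMap.comp_apply, LinearEquiv.coe_coe] at h
  rw [rho_expand X x] at h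
  simp only [map_sum, TensorProduct.map_tmul, LinearMap.id_coe, id_eq] at h
  have hrho : ∀ i, X.ρ (bas X i) = ∑ m, bas X m ⊗ₜ[k] gB X m (bas X i) := fun i => rho_expand X _
  simp_rw [hrho, TensorProduct.sum_tmul, map_sum, TensorProduct.assoc_tmul] at h
  rw [Finset.sum_comm] at h
  simp_rw [← TensorProduct.tmul_sum] at h
  have h2 := congrArg (fun t => TensorProduct.lid k (C ⊗[k] C)
      (TensorProduct.map ((bas X).coord j) LinearMap.id t)) h
  simpa only [extract] using h2.symm

lemma counit_gB (X : FdComod k C) (j : bIdx X) (x : X.carrier) :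
    Coalgebra.counit (R := k) (gB X j x) = (bas X).coord j x := by
  have h := LinearMap.congr_fun X.counit x
  simp only [LinearMap.comp_apply, LinearEquiv.coe_coe] at h
  rw [rho_expand X x] at h
  simp only [map_sum, TensorProduct.map_tmul, LinearMap.id_coe, id_eq] at h
  have hx : (TensorProduct.rid k X.carrier).symm x
      = ∑ i, bas X i ⊗ₜ[k] ((bas X).coord i x • (1 : k)) := by
    rw [TensorProduct.rid_symm_apply]
    conv_lhs => rw [← Basis.sum_repr (bas X) x]
    rw [TensorProduct.sum_tmul]
    simp_rw [TensorProduct.smul_tmul, Basis.coord_apply]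
  rw [hx] at h
  have h2 := congrArg (fun t => TensorProduct.lid k k
      (TensorProduct.map ((bas X).coord j) LinearMap.id t)) h
  simp only [extract] at h2
  rw [h2, smul_eq_mul, mul_one]

lemma canI_apply (X : FdComod k C) (S : X.carrier →ₗ[k] X.carrier) :
    canI k C X S = ∑ j, gB X j (S (bas X j)) := by
  simp only [canI, LinearMap.sum_apply]
  rfl

lemma sum_smulRight (X : FdComod k C) (S : X.carrier →ₗ[k] X.carrier) :
    ∑ j, ((bas X).coord j).smulRight (S (bas X j)) = S := by
  classical
  apply (bas X).ext
  intro i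
  simp [Basis.coord_apply, Basis.repr_self, Finsupp.single_apply, ite_smul,
    Finset.sum_ite_eq]

lemma rT_inj {M N W : Type} [AddCommGroup M] [Module k M] [AddCommGroup N] [Module k N]
    [AddCommGroup W] [Module k W] (f : M →ₗ[k] N) (hf : Function.Injective f) :
    Function.Injective (f.rTensor W) :=
  Module.Flat.rTensor_preserves_injective_linearMap f hf

lemma comul_mem_range {D : Submodule k C} (hD : IsSubcoalgebra k C D) (d : D) :
    Coalgebra.comul (R := k) (d : C) ∈ LinearMap.range (D.subtype.rTensor C) := by
  obtain ⟨t, ht⟩ := hD d d.2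
  exact ⟨D.subtype.lTensor D t, by
    rw [← LinearMap.comp_apply, LinearMap.rTensor_comp_lTensor, ht]⟩

/-- The coaction of a subcoalgebra, obtained by corestricting `Δ`. -/
noncomputable def subRho (D : Submodule k C) (hD : IsSubcoalgebra k C D) : D →ₗ[k] D ⊗[k] C :=
  (LinearEquiv.ofInjective (D.subtype.rTensor C)
      (rT_inj _ D.injective_subtype)).symm.toLinearMap ∘ₗ
    LinearMap.codRestrict _ (Coalgebra.comul ∘ₗ D.subtype) (fun d => comul_mem_range hD d)

lemma subRho_spec (D : Submodule k C) (hD : IsSubcoalgebra k C D) (d : D) :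
    D.subtype.rTensor C (subRho D hD d) = Coalgebra.comul (R := k) (d : C) := by
  simp only [subRho, LinearMap.comp_apply, LinearEquiv.coe_coe]
  rw [← LinearEquiv.ofInjective_apply (D.subtype.rTensor C) (h := rT_inj _ D.injective_subtype),
    LinearEquiv.apply_symm_apply]
  rfl

lemma assoc_nat {M N : Type} [AddCommGroup M] [Module k M] [AddCommGroup N] [Module k N]
    (f : M →ₗ[k] N) :
    (f.rTensor (C ⊗[k] C)) ∘ₗ (TensorProduct.assoc k M C C).toLinearMap
    = (TensorProduct.assoc k N C C).toLinearMap ∘ₗ ((f.rTensor C).rTensor C) := by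
  apply TensorProduct.ext
  apply TensorProduct.ext
  ext m c c'
  simp

lemma map_id_eq_rT {M N W : Type} [AddCommGroup M] [Module k M] [AddCommGroup N] [Module k N]
    [AddCommGroup W] [Module k W] (f : M →ₗ[k] N) :
    TensorProduct.map f (LinearMap.id (M := W)) = f.rTensor W := rfl

lemma map_eq_lT {M N W : Type} [AddCommGroup M] [Module k M] [AddCommGroup N] [Module k N]
    [AddCommGroup W] [Module k W] (g : M →ₗ[k] N) :
    TensorProduct.map (LinearMap.id (M := W)) g = g.lTensor W := rfl

lemma subRho_comp (D : Submodule k C) (hD : IsSubcoalgebra k C D) :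
    D.subtype.rTensor C ∘ₗ subRho D hD = Coalgebra.comul ∘ₗ D.subtype :=
  LinearMap.ext fun d => subRho_spec D hD d

/-- A finite-dimensional subcoalgebra as a f.d. right comodule. -/
noncomputable def subComod (D : Submodule k C) (hD : IsSubcoalgebra k C D)
    [FiniteDimensional k D] : FdComod k C where
  carrier := D
  ρ := subRho D hD
  coassoc := by
    apply LinearMap.ext
    intro d
    apply rT_inj (W := C ⊗[k] C) D.subtype D.injective_subtype
    simp only [LinearMap.comp_apply, LinearEquiv.coe_coe, map_id_eq_rT, map_eq_lT]
    have hR : D.subtype.rTensor (C ⊗[k] C) ((Coalgebra.comul (R := k)).lTensor D (subRho D hD d))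
        = (Coalgebra.comul (R := k)).lTensor C (Coalgebra.comul (R := k) (d : C)) := by
      rw [← LinearMap.comp_apply, LinearMap.rTensor_comp_lTensor,
        ← LinearMap.lTensor_comp_rTensor, LinearMap.comp_apply, subRho_spec]
    have hA := LinearMap.congr_fun (assoc_nat (k := k) (C := C) D.subtype)
      ((subRho D hD).rTensor C (subRho D hD d))
    simp only [LinearMap.comp_apply, LinearEquiv.coe_coe] at hA
    have hB : (D.subtype.rTensor C).rTensor C ((subRho D hD).rTensor C (subRho D hD d))
        = (Coalgebra.comul (R := k)).rTensor C (Coalgebra.comul (R := k) (d : C)) := by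
      rw [← LinearMap.comp_apply, ← LinearMap.rTensor_comp, subRho_comp,
        LinearMap.rTensor_comp, LinearMap.comp_apply, subRho_spec]
    rw [hR, hA, hB]
    exact Coalgebra.coassoc_apply (d : C)
  counit := by
    apply LinearMap.ext
    intro d
    apply rT_inj (W := k) D.subtype D.injective_subtype
    simp only [LinearMap.comp_apply, LinearEquiv.coe_coe, map_eq_lT]
    have hL : D.subtype.rTensor k ((Coalgebra.counit (R := k)).lTensor D (subRho D hD d))
        = (d : C) ⊗ₜ[k] (1 : k) := by
      rw [← LinearMap.comp_apply, LinearMap.rTensor_comp_lTensor,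
        ← LinearMap.lTensor_comp_rTensor, LinearMap.comp_apply, subRho_spec]
      exact Coalgebra.lTensor_counit_comul (d : C)
    rw [hL, TensorProduct.rid_symm_apply, LinearMap.rTensor_tmul]
    rfl

lemma gB_comodHom (X : FdComod k C) (j : bIdx X) :
    Coalgebra.comul ∘ₗ gB X j = (gB X j).rTensor C ∘ₗ X.ρ := by
  apply LinearMap.ext
  intro x
  rw [LinearMap.comp_apply, LinearMap.comp_apply, comul_gB, rho_expand]
  simp [map_sum, LinearMap.rTensor_tmul]

lemma isComodHom_codRestrict (D : Submodule k C) (hD : IsSubcoalgebra k C D)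
    [FiniteDimensional k D] (X : FdComod k C) (g : X.carrier →ₗ[k] C)
    (hg : Coalgebra.comul ∘ₗ g = g.rTensor C ∘ₗ X.ρ) (hmem : ∀ x, g x ∈ D) :
    IsComodHom k C X (subComod D hD) (LinearMap.codRestrict D g hmem) := by
  unfold IsComodHom
  apply LinearMap.ext
  intro x
  apply rT_inj (W := C) D.subtype D.injective_subtype
  show D.subtype.rTensor C (subRho D hD (LinearMap.codRestrict D g hmem x))
      = D.subtype.rTensor C ((LinearMap.codRestrict D g hmem).rTensor C (X.ρ x))
  rw [subRho_spec D hD ((LinearMap.codRestrict D g hmem) x)]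
  rw [← LinearMap.comp_apply (D.subtype.rTensor C), ← LinearMap.rTensor_comp,
    LinearMap.subtype_comp_codRestrict, LinearMap.codRestrict_apply,
    ← LinearMap.comp_apply (g.rTensor C), ← hg]
  rfl

lemma sup_subcoalgebra {D₁ D₂ : Submodule k C} (h1 : IsSubcoalgebra k C D₁)
    (h2 : IsSubcoalgebra k C D₂) : IsSubcoalgebra k C (D₁ ⊔ D₂) := by
  have mono : ∀ {D D' : Submodule k C} (_ : D ≤ D'),
      LinearMap.range (TensorProduct.map D.subtype D.subtype) ≤
      LinearMap.range (TensorProduct.map D'.subtype D'.subtype) := by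
    intro D D' h t ht
    obtain ⟨u, rfl⟩ := ht
    refine ⟨TensorProduct.map (Submodule.inclusion h) (Submodule.inclusion h) u, ?_⟩
    rw [← LinearMap.comp_apply, ← TensorProduct.map_comp]
    congr 1
  intro c hc
  obtain ⟨a, ha, b, hb, rfl⟩ := Submodule.mem_sup.mp hc
  rw [map_add]
  exact add_mem (mono le_sup_left (h1 a ha)) (mono le_sup_right (h2 b hb))

lemma CX_subcoalgebra (X : FdComod k C) :
    IsSubcoalgebra k C (⨆ i, LinearMap.range (gB X i)) := by
  classical
  have hle : ∀ i, LinearMap.range (gB X i) ≤ ⨆ i, LinearMap.range (gB X i) :=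
    fun i => le_iSup (fun i => LinearMap.range (gB X i)) i
  intro c hc
  refine Submodule.iSup_induction (motive := fun c => (Coalgebra.comul (R := k) c) ∈
      LinearMap.range (TensorProduct.map (⨆ i, LinearMap.range (gB X i)).subtype
        (⨆ i, LinearMap.range (gB X i)).subtype)) _ hc ?_ ?_ ?_
  · rintro i c ⟨y, rfl⟩
    rw [comul_gB]
    apply Submodule.sum_mem
    intro m _
    exact ⟨(⟨gB X i (bas X m), hle i ⟨_, rfl⟩⟩ : ↥(⨆ i, LinearMap.range (gB X i))) ⊗ₜ[k]
      (⟨gB X m y, hle m ⟨_, rfl⟩⟩ : ↥(⨆ i, LinearMap.range (gB X i))), rfl⟩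
  · simp only [map_zero]
    exact zero_mem _
  · intro a b ha hb
    rw [map_add]
    exact add_mem ha hb

lemma smulRight_add {M : Type} [AddCommGroup M] [Module k M] {W : Type} [AddCommGroup W]
    [Module k W] (β : W →ₗ[k] k) (x y : M) :
    β.smulRight (x + y) = β.smulRight x + β.smulRight y := by
  ext w; simp [smul_add]

lemma smulRight_smulk {M : Type} [AddCommGroup M] [Module k M] {W : Type} [AddCommGroup W]
    [Module k W] (β : W →ₗ[k] k) (a : k) (x : M) :
    β.smulRight (a • x) = a • β.smulRight x := by
  ext w
  simp only [LinearMap.smulRight_apply, LinearMap.smul_apply]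
  exact smul_comm _ _ _

lemma comp_smulRight' {M N W : Type} [AddCommGroup M] [Module k M] [AddCommGroup N] [Module k N]
    [AddCommGroup W] [Module k W] (β : W →ₗ[k] k) (x : M) (f : M →ₗ[k] N) :
    f ∘ₗ β.smulRight x = β.smulRight (f x) := by
  ext w; simp

lemma smulRight_comp' {M W W' : Type} [AddCommGroup M] [Module k M] [AddCommGroup W] [Module k W]
    [AddCommGroup W'] [Module k W'] (β : W →ₗ[k] k) (x : M) (f : W' →ₗ[k] W) :
    β.smulRight x ∘ₗ f = (β ∘ₗ f).smulRight x := by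
  ext w; simp

/-- The canonical rank-one endomorphism family of a f.d. subcoalgebra, as a linear map. -/
noncomputable def subE (D : Submodule k C) (hD : IsSubcoalgebra k C D)
    [FiniteDimensional k D] :
    D →ₗ[k] ((subComod D hD).carrier →ₗ[k] (subComod D hD).carrier) where
  toFun d := (Coalgebra.counit ∘ₗ D.subtype).smulRight d
  map_add' x y := smulRight_add _ x y
  map_smul' a x := smulRight_smulk _ a x

end Stmt15Aux

open Stmt15Aux in
theorem unique_map_from_coalgebra_to_dinatural
    -- for each c : C, the smallest subcoalgebra N_c containing c, given as a
    -- finite-dimensional right C-comodule `Nc c` embedded into C by `ι c`,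
    -- with coaction corresponding to Δ:
    (Nc : C → FdComod k C) (ι : ∀ c : C, (Nc c).carrier →ₗ[k] C)
    (hinj : ∀ c, Function.Injective (ι c))
    (hι : ∀ c, (TensorProduct.map (ι c) LinearMap.id) ∘ₗ (Nc c).ρ
            = Coalgebra.comul ∘ₗ ι c)
    (hsub : ∀ c, IsSubcoalgebra k C (LinearMap.range (ι c)))
    (cbar : ∀ c : C, (Nc c).carrier) (hcbar : ∀ c, ι c (cbar c) = c)
    (hmin : ∀ (c : C) (D : Submodule k C), IsSubcoalgebra k C D → c ∈ D →
              LinearMap.range (ι c) ≤ D)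
    -- a vector space with a dinatural family:
    (U : Type) [AddCommGroup U] [Module k U]
    (iU : ∀ X : FdComod k C, (X.carrier →ₗ[k] X.carrier) →ₗ[k] U)
    (hdin : DinatComod k C U iU) :
    (∃! φ : C →ₗ[k] U, ∀ X : FdComod k C, φ ∘ₗ canI k C X = iU X) ∧
    (∀ φ : C →ₗ[k] U, (∀ X : FdComod k C, φ ∘ₗ canI k C X = iU X) →
      ∀ c : C, φ c = iU (Nc c) ((Coalgebra.counit ∘ₗ ι c).smulRight (cbar c))) := by
  classical
  set φf : C → U := fun c => iU (Nc c) ((Coalgebra.counit ∘ₗ ι c).smulRight (cbar c)) with hφf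
  -- Step A : the value of iU on the canonical rank-one endomorphism of any
  -- f.d. subcoalgebra D at d ∈ D equals φf ↑d
  have stepA : ∀ (D : Submodule k C) (hD : IsSubcoalgebra k C D)
      (_ : FiniteDimensional k D) (d : D),
      iU (Stmt15Aux.subComod D hD) (Stmt15Aux.subE D hD d) = φf (D.subtype d) := by
    intro D hD hfin d
    have hmem : ∀ y, ι (D.subtype d) y ∈ D := fun y => hmin _ D hD d.2 ⟨y, rfl⟩
    have hcomod := Stmt15Aux.isComodHom_codRestrict D hD (Nc (D.subtype d)) (ι (D.subtype d))
      (hι (D.subtype d)).symm hmem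
    have h := hdin (Stmt15Aux.subComod D hD) (Nc (D.subtype d))
        (LinearMap.codRestrict D (ι (D.subtype d)) hmem) hcomod
        ((Coalgebra.counit ∘ₗ D.subtype).smulRight (cbar (D.subtype d)))
    erw [Stmt15Aux.comp_smulRight', Stmt15Aux.smulRight_comp'] at h
    have e1 : (LinearMap.codRestrict D (ι (D.subtype d)) hmem) (cbar (D.subtype d)) = d :=
      Subtype.ext (hcbar _)
    have e2 : (Coalgebra.counit ∘ₗ D.subtype) ∘ₗ
          LinearMap.codRestrict D (ι (D.subtype d)) hmem
        = Coalgebra.counit ∘ₗ ι (D.subtype d) := by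
      rw [LinearMap.comp_assoc, LinearMap.subtype_comp_codRestrict]
    calc iU (Stmt15Aux.subComod D hD) (Stmt15Aux.subE D hD d)
        = iU (Stmt15Aux.subComod D hD) (Stmt15Aux.subE D hD
            ((LinearMap.codRestrict D (ι (D.subtype d)) hmem) (cbar (D.subtype d)))) := by
          rw [e1]
      _ = iU (Nc (D.subtype d)) (((Coalgebra.counit ∘ₗ D.subtype) ∘ₗ
            LinearMap.codRestrict D (ι (D.subtype d)) hmem).smulRight (cbar (D.subtype d))) := h
      _ = φf (D.subtype d) :=
          congrArg (fun γ : (Nc (D.subtype d)).carrier →ₗ[k] k =>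
            iU (Nc (D.subtype d)) (γ.smulRight (cbar (D.subtype d)))) e2
  -- φf is additive
  have hadd : ∀ c₁ c₂ : C, φf (c₁ + c₂) = φf c₁ + φf c₂ := by
    intro c₁ c₂
    have hD : IsSubcoalgebra k C (LinearMap.range (ι c₁) ⊔ LinearMap.range (ι c₂)) :=
      Stmt15Aux.sup_subcoalgebra (hsub c₁) (hsub c₂)
    have h1 : c₁ ∈ LinearMap.range (ι c₁) ⊔ LinearMap.range (ι c₂) :=
      Submodule.mem_sup_left ⟨cbar c₁, hcbar c₁⟩
    have h2 : c₂ ∈ LinearMap.range (ι c₁) ⊔ LinearMap.range (ι c₂) :=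
      Submodule.mem_sup_right ⟨cbar c₂, hcbar c₂⟩
    calc φf (c₁ + c₂)
        = iU (Stmt15Aux.subComod _ hD) (Stmt15Aux.subE _ hD (⟨c₁, h1⟩ + ⟨c₂, h2⟩)) :=
          (stepA _ hD inferInstance (⟨c₁, h1⟩ + ⟨c₂, h2⟩)).symm
      _ = iU (Stmt15Aux.subComod _ hD) (Stmt15Aux.subE _ hD ⟨c₁, h1⟩)
          + iU (Stmt15Aux.subComod _ hD) (Stmt15Aux.subE _ hD ⟨c₂, h2⟩) := by
          rw [map_add, map_add]
      _ = φf c₁ + φf c₂ := by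
          rw [stepA _ hD inferInstance ⟨c₁, h1⟩, stepA _ hD inferInstance ⟨c₂, h2⟩]
          rfl
  -- φf commutes with scalars
  have hsmul : ∀ (a : k) (c : C), φf (a • c) = a • φf c := by
    intro a c
    have h1 : c ∈ LinearMap.range (ι c) := ⟨cbar c, hcbar c⟩
    calc φf (a • c)
        = iU (Stmt15Aux.subComod _ (hsub c)) (Stmt15Aux.subE _ (hsub c) (a • (⟨c, h1⟩ : LinearMap.range (ι c)))) :=
          (stepA _ (hsub c) inferInstance (a • (⟨c, h1⟩ : LinearMap.range (ι c)))).symm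
      _ = a • iU (Stmt15Aux.subComod _ (hsub c)) (Stmt15Aux.subE _ (hsub c) ⟨c, h1⟩) := by
          rw [map_smul, map_smul]
      _ = a • φf c := by
          rw [stepA _ (hsub c) inferInstance ⟨c, h1⟩]
          rfl
  set φ : C →ₗ[k] U :=
    { toFun := φf, map_add' := hadd, map_smul' := hsmul } with hφdef
  -- the key pointwise identity
  have key : ∀ (X : FdComod k C) (j : Stmt15Aux.bIdx X) (x : X.carrier),
      φf (Stmt15Aux.gB X j x) = iU X (((Stmt15Aux.bas X).coord j).smulRight x) := by
    intro X j x
    have hsubCX : IsSubcoalgebra k C (⨆ i, LinearMap.range (Stmt15Aux.gB X i)) :=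
      Stmt15Aux.CX_subcoalgebra X
    have hmemCX : ∀ i y, Stmt15Aux.gB X i y ∈ (⨆ i, LinearMap.range (Stmt15Aux.gB X i)) :=
      fun i y => le_iSup (fun i => LinearMap.range (Stmt15Aux.gB X i)) i ⟨y, rfl⟩
    have hcomod := Stmt15Aux.isComodHom_codRestrict _ hsubCX X (Stmt15Aux.gB X j)
      (Stmt15Aux.gB_comodHom X j) (hmemCX j)
    have h := hdin (Stmt15Aux.subComod _ hsubCX) X
        (LinearMap.codRestrict _ (Stmt15Aux.gB X j) (hmemCX j)) hcomod
        ((Coalgebra.counit ∘ₗ (⨆ i, LinearMap.range (Stmt15Aux.gB X i)).subtype).smulRight x)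
    erw [Stmt15Aux.comp_smulRight', Stmt15Aux.smulRight_comp'] at h
    have e2 : (Coalgebra.counit ∘ₗ (⨆ i, LinearMap.range (Stmt15Aux.gB X i)).subtype) ∘ₗ
          LinearMap.codRestrict _ (Stmt15Aux.gB X j) (hmemCX j) = (Stmt15Aux.bas X).coord j := by
      rw [LinearMap.comp_assoc, LinearMap.subtype_comp_codRestrict]
      apply LinearMap.ext
      intro y
      exact Stmt15Aux.counit_gB X j y
    calc φf (Stmt15Aux.gB X j x)
        = iU (Stmt15Aux.subComod _ hsubCX) (Stmt15Aux.subE _ hsubCX ⟨Stmt15Aux.gB X j x, hmemCX j x⟩) :=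
          (stepA _ hsubCX inferInstance ⟨Stmt15Aux.gB X j x, hmemCX j x⟩).symm
      _ = iU X (((Coalgebra.counit ∘ₗ (⨆ i, LinearMap.range (Stmt15Aux.gB X i)).subtype) ∘ₗ
            LinearMap.codRestrict _ (Stmt15Aux.gB X j) (hmemCX j)).smulRight x) := h
      _ = iU X (((Stmt15Aux.bas X).coord j).smulRight x) :=
          congrArg (fun γ : X.carrier →ₗ[k] k => iU X (γ.smulRight x)) e2
  -- φ inverts canI
  have hφcan : ∀ (X : FdComod k C), φ ∘ₗ canI k C X = iU X := by
    intro X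
    apply LinearMap.ext
    intro S
    rw [LinearMap.comp_apply, Stmt15Aux.canI_apply, map_sum]
    have e : ∀ j ∈ Finset.univ, φ (Stmt15Aux.gB X j (S (Stmt15Aux.bas X j)))
        = iU X (((Stmt15Aux.bas X).coord j).smulRight (S (Stmt15Aux.bas X j))) :=
      fun j _ => key X j _
    rw [Finset.sum_congr rfl e, ← map_sum, Stmt15Aux.sum_smulRight]
  -- canI of the canonical rank-one endomorphism of N_c is c
  have canI_Nc : ∀ c : C,
      canI k C (Nc c) ((Coalgebra.counit ∘ₗ ι c).smulRight (cbar c)) = c := by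
    intro c
    have h := LinearMap.congr_fun (hι c) (cbar c)
    simp only [LinearMap.comp_apply] at h
    rw [hcbar c, Stmt15Aux.rho_expand] at h
    simp only [map_sum, TensorProduct.map_tmul, LinearMap.id_coe, id_eq] at h
    rw [Stmt15Aux.canI_apply]
    have e : ∀ j, Stmt15Aux.gB (Nc c) j
          (((Coalgebra.counit ∘ₗ ι c).smulRight (cbar c)) (Stmt15Aux.bas (Nc c) j))
        = Coalgebra.counit (R := k) (ι c (Stmt15Aux.bas (Nc c) j)) • Stmt15Aux.gB (Nc c) j (cbar c) := by
      intro j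
      rw [LinearMap.smulRight_apply, map_smul, LinearMap.comp_apply]
    rw [Finset.sum_congr rfl fun j _ => e j]
    have e3 : ∑ j, Coalgebra.counit (R := k) (ι c (Stmt15Aux.bas (Nc c) j)) • Stmt15Aux.gB (Nc c) j (cbar c)
        = TensorProduct.lid k C ((Coalgebra.counit (R := k)).rTensor C
            (∑ j, ι c (Stmt15Aux.bas (Nc c) j) ⊗ₜ[k] Stmt15Aux.gB (Nc c) j (cbar c))) := by
      simp [map_sum, LinearMap.rTensor_tmul, TensorProduct.lid_tmul]
    rw [e3, h, Coalgebra.rTensor_counit_comul]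
    simp
  have huniq : ∀ ψ : C →ₗ[k] U, (∀ X : FdComod k C, ψ ∘ₗ canI k C X = iU X) →
      ∀ c : C, ψ c = φf c := by
    intro ψ hψ c
    have h := LinearMap.congr_fun (hψ (Nc c)) ((Coalgebra.counit ∘ₗ ι c).smulRight (cbar c))
    rw [LinearMap.comp_apply, canI_Nc c] at h
    exact h
  exact ⟨⟨φ, hφcan, fun ψ hψ => LinearMap.ext fun c => huniq ψ hψ c⟩, fun ψ hψ c => huniq ψ hψ c⟩
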